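/- For all integers j ≥ 1 and real ξ that is not a nonnegative integer, the fractional difference coefficient Δ_j(-ξ) = Γ(j-ξ)/(Γ(-ξ)Γ(j+1)) satisfies |Δ_j(-ξ) - j^{-ξ-1}/Γ(-ξ)| ≤ C j^{-ξ-2} for some constant C depending only on ξ. -/

import Mathlib

open Filter Finset Real Topology Nat

noncomputable def ff (ξ : ℝ) (n : ℕ) : ℝ :=
  Real.Gamma ((n : ℝ) - ξ) / Real.Gamma ((n : ℝ) + 1) * (n : ℝ) ^ (ξ + 1)

lemma aux_ne (ξ : ℝ) (hξ : ∀ n : ℕ, ξ ≠ n) (m : ℕ) : (-ξ + m) ≠ 0 := by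
  intro h; exact hξ m (by linarith)

lemma aux_Gamma_ne (ξ : ℝ) (hξ : ∀ n : ℕ, ξ ≠ n) : Real.Gamma (-ξ) ≠ 0 :=
  Real.Gamma_ne_zero fun m h => hξ m (by linarith)

lemma aux_Gamma_sub_ne (ξ : ℝ) (hξ : ∀ n : ℕ, ξ ≠ n) (n : ℕ) :
    Real.Gamma ((n : ℝ) - ξ) ≠ 0 :=
  Real.Gamma_ne_zero fun m h => hξ (n + m) (by push_cast; linarith)

lemma aux_prod (ξ : ℝ) (hξ : ∀ n : ℕ, ξ ≠ n) (n : ℕ) :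
    ∏ j ∈ Finset.range (n + 1), (-ξ + j) = Real.Gamma (-ξ + n + 1) / Real.Gamma (-ξ) := by
  have hΓ := aux_Gamma_ne ξ hξ
  induction n with
  | zero =>
    have h0 := aux_ne ξ hξ 0
    simp only [Nat.cast_zero, add_zero] at h0 ⊢
    rw [Finset.prod_range_one, Real.Gamma_add_one h0]
    field_simp
    simp
  | succ n ih =>
    have hn1 : (-ξ + (n : ℝ) + 1) ≠ 0 := by
      intro h; exact aux_ne ξ hξ (n + 1) (by push_cast; linarith)
    rw [Finset.prod_range_succ, ih]
    push_cast
    rw [show -ξ + ((n : ℝ) + 1) + 1 = (-ξ + (n : ℝ) + 1) + 1 by ring,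
      Real.Gamma_add_one hn1]
    field_simp
    ring

lemma aux_tendsto (ξ : ℝ) (hξ : ∀ n : ℕ, ξ ≠ n) :
    Tendsto (ff ξ) atTop (𝓝 1) := by
  have hΓ := aux_Gamma_ne ξ hξ
  -- g n = n^{-ξ} n! / Γ(n - ξ + 1)  tends to 1
  have hg : Tendsto (fun n : ℕ => Real.GammaSeq (-ξ) n / Real.Gamma (-ξ)) atTop (𝓝 1) := by
    have := (Real.GammaSeq_tendsto_Gamma (-ξ)).div_const (Real.Gamma (-ξ))
    rwa [div_self hΓ] at this
  -- rewrite g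
  have hgeq : ∀ n : ℕ, Real.GammaSeq (-ξ) n / Real.Gamma (-ξ)
      = (n : ℝ) ^ (-ξ) * (n ! : ℝ) / Real.Gamma (-ξ + n + 1) := by
    intro n
    have hG2 : Real.Gamma (-ξ + n + 1) ≠ 0 := by
      have := aux_Gamma_sub_ne ξ hξ (n + 1)
      push_cast at this
      convert this using 2
      ring
    rw [Real.GammaSeq, aux_prod ξ hξ n]
    field_simp
  -- inverse tends to 1
  have hginv : Tendsto (fun n : ℕ => (Real.Gamma (-ξ + n + 1)) / ((n : ℝ) ^ (-ξ) * (n ! : ℝ)))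
      atTop (𝓝 1) := by
    have := (hg.congr (fun n => by rw [hgeq n])).inv₀ one_ne_zero
    simpa using this
  -- n / (n - ξ) tends to 1
  have hfrac : Tendsto (fun n : ℕ => (n : ℝ) / ((n : ℝ) - ξ)) atTop (𝓝 1) := by
    have h0 : Tendsto (fun n : ℕ => ((n : ℝ))⁻¹) atTop (𝓝 0) :=
      tendsto_inv_atTop_zero.comp tendsto_natCast_atTop_atTop
    have h1 : Tendsto (fun n : ℕ => (1 - ξ * ((n : ℝ))⁻¹)⁻¹) atTop (𝓝 1) := by
      have : Tendsto (fun n : ℕ => 1 - ξ * ((n : ℝ))⁻¹) atTop (𝓝 1) := by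
        have := (h0.const_mul ξ).const_sub 1
        simpa using this
      simpa using this.inv₀ one_ne_zero
    refine h1.congr' ?_
    filter_upwards [eventually_ge_atTop 1] with n hn
    have hn0 : (0 : ℝ) < n := by exact_mod_cast hn
    rw [show (1 - ξ * ((n : ℝ))⁻¹) = ((n : ℝ) - ξ) / (n : ℝ) from by field_simp, inv_div]
  -- combine
  have key : (fun n : ℕ => (Real.Gamma (-ξ + n + 1)) / ((n : ℝ) ^ (-ξ) * (n ! : ℝ))
      * ((n : ℝ) / ((n : ℝ) - ξ))) =ᶠ[atTop] ff ξ := by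
    filter_upwards [eventually_ge_atTop 1] with n hn
    have hn0 : (0 : ℝ) < n := by exact_mod_cast hn
    have hsub : ((n : ℝ) - ξ) ≠ 0 := sub_ne_zero.mpr fun h => hξ n h.symm
    have hGadd : Real.Gamma (-ξ + n + 1) = ((n : ℝ) - ξ) * Real.Gamma ((n : ℝ) - ξ) := by
      rw [show -ξ + (n : ℝ) + 1 = ((n : ℝ) - ξ) + 1 by ring, Real.Gamma_add_one hsub]
    have hfact : Real.Gamma ((n : ℝ) + 1) = (n ! : ℝ) := Real.Gamma_nat_eq_factorial n
    have hrpow : (n : ℝ) ^ (ξ + 1) * (n : ℝ) ^ (-ξ) = (n : ℝ) := by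
      rw [← Real.rpow_add hn0]
      norm_num
    have hfne : (n ! : ℝ) ≠ 0 := by exact_mod_cast n.factorial_ne_zero
    have hrne : (n : ℝ) ^ (-ξ) ≠ 0 := (Real.rpow_pos_of_pos hn0 _).ne'
    rw [ff, hGadd, hfact]
    field_simp
    linear_combination (-Real.Gamma ((n : ℝ) - ξ)) * hrpow
  have := (hginv.mul hfrac).congr' key
  simpa using this

lemma aux_pos (ξ : ℝ) (n : ℕ) (hn : ξ < (n : ℝ)) (hn0 : (0:ℝ) < (n : ℝ)) : 0 < ff ξ n := by
  have h1 : 0 < (n : ℝ) - ξ := by linarith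
  have h2 : (0:ℝ) < (n : ℝ) + 1 := by linarith
  exact mul_pos (div_pos (Real.Gamma_pos_of_pos h1) (Real.Gamma_pos_of_pos h2))
    (Real.rpow_pos_of_pos hn0 _)

lemma aux_log_taylor {u : ℝ} (hu : |u| ≤ 1/2) : |Real.log (1 - u) + u| ≤ 2 * u ^ 2 := by
  have h1 : |u| < 1 := by linarith [abs_nonneg u]
  have := Real.abs_log_sub_add_sum_range_le h1 1
  simp only [Finset.sum_range_one, pow_one, Nat.cast_zero, zero_add, div_one] at this
  have h2 : |u| ^ 2 / (1 - |u|) ≤ 2 * u ^ 2 := by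
    rw [sq_abs]
    rw [div_le_iff₀ (by linarith [abs_nonneg u])]
    nlinarith [sq_nonneg u, abs_nonneg u]
  calc |Real.log (1 - u) + u| = |u + Real.log (1 - u)| := by rw [add_comm]
    _ ≤ |u| ^ 2 / (1 - |u|) := this
    _ ≤ 2 * u ^ 2 := h2

lemma aux_increment (ξ : ℝ) (hξ : ∀ n : ℕ, ξ ≠ n) (n : ℕ)
    (hcond : 2 * |ξ + 1| + |ξ| + 2 ≤ (n : ℝ)) :
    |Real.log (ff ξ (n + 1)) - Real.log (ff ξ n)|
      ≤ (2 * (ξ + 1) ^ 2 + 2 * |ξ + 1| + 1) * (1 / (n : ℝ) - 1 / ((n : ℝ) + 1)) := by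
  have habs := abs_nonneg (ξ + 1)
  have habs2 := abs_nonneg ξ
  have hn2 : (2:ℝ) ≤ (n : ℝ) := by linarith
  have hn0 : (0:ℝ) < (n : ℝ) := by linarith
  have hξn : ξ < (n : ℝ) := by
    have := le_abs_self ξ; linarith
  set u : ℝ := (ξ + 1) / ((n : ℝ) + 1) with hu_def
  set v : ℝ := 1 / ((n : ℝ) + 1) with hv_def
  have hn1 : (0:ℝ) < (n : ℝ) + 1 := by linarith
  have hu : |u| ≤ 1/2 := by
    rw [hu_def, abs_div, abs_of_pos hn1, div_le_iff₀ hn1]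
    linarith
  have hv : |v| ≤ 1/2 := by
    rw [hv_def, abs_div, abs_of_pos hn1, abs_one, div_le_iff₀ hn1]
    linarith
  have h1u : 0 < 1 - u := by
    have := neg_abs_le u; have := le_abs_self u; linarith
  have h1v : 0 < 1 - v := by
    have := le_abs_self v; linarith
  have h1veq : 1 - v = (n : ℝ) / ((n : ℝ) + 1) := by
    rw [hv_def]; field_simp; ring
  have h1ueq : 1 - u = ((n : ℝ) - ξ) / ((n : ℝ) + 1) := by
    rw [hu_def]; field_simp; ring
  -- ratio identity
  have hratio : ff ξ (n + 1) = ff ξ n * ((1 - u) / (1 - v) ^ (ξ + 1)) := by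
    have hsub : ((n : ℝ) - ξ) ≠ 0 := sub_ne_zero.mpr fun h => hξ n h.symm
    have hG1 : Real.Gamma (((n:ℕ) + 1 : ℕ) - ξ : ℝ) = ((n : ℝ) - ξ) * Real.Gamma ((n : ℝ) - ξ) := by
      push_cast
      rw [show (n : ℝ) + 1 - ξ = ((n : ℝ) - ξ) + 1 by ring, Real.Gamma_add_one hsub]
    have hG2 : Real.Gamma ((((n:ℕ) + 1 : ℕ) : ℝ) + 1) = ((n : ℝ) + 1) * Real.Gamma ((n : ℝ) + 1) := by
      push_cast
      rw [show (n : ℝ) + 1 + 1 = ((n : ℝ) + 1) + 1 by ring, Real.Gamma_add_one hn1.ne']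
    have hrv : (1 - v) ^ (ξ + 1) = (n : ℝ) ^ (ξ + 1) / ((n : ℝ) + 1) ^ (ξ + 1) := by
      rw [h1veq, Real.div_rpow hn0.le hn1.le]
    have hGpos : 0 < Real.Gamma ((n : ℝ) + 1) := Real.Gamma_pos_of_pos hn1
    have hr1 : (0:ℝ) < (n : ℝ) ^ (ξ + 1) := Real.rpow_pos_of_pos hn0 _
    have hr2 : (0:ℝ) < ((n : ℝ) + 1) ^ (ξ + 1) := Real.rpow_pos_of_pos hn1 _
    rw [ff, ff, hG1, hG2, hrv, h1ueq]
    push_cast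
    field_simp
  have hffpos : 0 < ff ξ n := aux_pos ξ n hξn hn0
  have hrvpos : (0:ℝ) < (1 - v) ^ (ξ + 1) := Real.rpow_pos_of_pos h1v _
  have hlog : Real.log (ff ξ (n + 1)) - Real.log (ff ξ n)
      = (Real.log (1 - u) + u) - (ξ + 1) * (Real.log (1 - v) + v) := by
    have huv : u = (ξ + 1) * v := by rw [hu_def, hv_def]; ring
    rw [hratio, Real.log_mul hffpos.ne' (div_pos h1u hrvpos).ne',
      Real.log_div h1u.ne' hrvpos.ne', Real.log_rpow h1v]
    rw [huv]; ring
  have e1 := aux_log_taylor hu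
  have e2 := aux_log_taylor hv
  have hv2 : v ^ 2 ≤ 1 / (n : ℝ) - 1 / ((n : ℝ) + 1) := by
    rw [hv_def]
    rw [div_sub_div _ _ hn0.ne' hn1.ne']
    rw [div_pow]
    rw [div_le_div_iff₀ (by positivity) (by positivity)]
    nlinarith
  have hu2 : u ^ 2 ≤ (ξ + 1) ^ 2 * (1 / (n : ℝ) - 1 / ((n : ℝ) + 1)) := by
    have : u ^ 2 = (ξ + 1) ^ 2 * v ^ 2 := by rw [hu_def, hv_def]; field_simp
    rw [this]
    exact mul_le_mul_of_nonneg_left hv2 (sq_nonneg _)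
  have hvpos : 0 ≤ 1 / (n : ℝ) - 1 / ((n : ℝ) + 1) := le_trans (sq_nonneg v) hv2
  calc |Real.log (ff ξ (n + 1)) - Real.log (ff ξ n)|
      = |(Real.log (1 - u) + u) - (ξ + 1) * (Real.log (1 - v) + v)| := by rw [hlog]
    _ ≤ |Real.log (1 - u) + u| + |ξ + 1| * |Real.log (1 - v) + v| := by
        refine le_trans (abs_sub _ _) ?_
        rw [abs_mul]
    _ ≤ 2 * u ^ 2 + |ξ + 1| * (2 * v ^ 2) := by
        have := mul_le_mul_of_nonneg_left e2 habs
        linarith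
    _ ≤ (2 * (ξ + 1) ^ 2 + 2 * |ξ + 1| + 1) * (1 / (n : ℝ) - 1 / ((n : ℝ) + 1)) := by
        nlinarith [mul_le_mul_of_nonneg_left hv2 habs]


lemma aux_telescope (B : ℝ) (f : ℕ → ℝ) (j : ℕ) (hj : 0 < j)
    (hstep : ∀ k : ℕ, j ≤ k → |f (k + 1) - f k| ≤ B * (1 / (k : ℝ) - 1 / ((k : ℝ) + 1)))
    (hlim : Filter.Tendsto f Filter.atTop (nhds 0)) : |f j| ≤ B / (j : ℝ) := by
  have hj0 : (0:ℝ) < (j : ℝ) := by exact_mod_cast hj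
  have htel : ∀ M : ℕ, |f (j + M) - f j| ≤ B / (j : ℝ) := by
    intro M
    have hsum : f (j + M) - f j = ∑ k ∈ Finset.range M, (f (j + (k + 1)) - f (j + k)) := by
      have := Finset.sum_range_sub (fun k => f (j + k)) M
      simpa using this.symm
    have hg0 : (fun k : ℕ => B / ((j + k : ℕ) : ℝ)) 0 = B / (j : ℝ) := by norm_num
    have hgM : 0 ≤ B / ((j + M : ℕ) : ℝ) := by
      rcases le_or_gt 0 B with hB | hB
      · positivity
      · -- B < 0 impossible-ish: but from hstep at k = j, RHS ≥ |..| ≥ 0 gives B ≥ 0 since factor > 0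
        exfalso
        have h1 := hstep j le_rfl
        have h2 : 0 < 1 / (j : ℝ) - 1 / ((j : ℝ) + 1) := by
          rw [sub_pos, div_lt_div_iff₀ (by linarith) hj0]
          linarith
        nlinarith [abs_nonneg (f (j + 1) - f j)]
    rw [hsum]
    calc |∑ k ∈ Finset.range M, (f (j + (k + 1)) - f (j + k))|
        ≤ ∑ k ∈ Finset.range M, |f (j + (k + 1)) - f (j + k)| :=
          Finset.abs_sum_le_sum_abs _ _
      _ ≤ ∑ k ∈ Finset.range M,
            ((fun k : ℕ => B / ((j + k : ℕ) : ℝ)) k - (fun k : ℕ => B / ((j + k : ℕ) : ℝ)) (k + 1)) := by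
          refine Finset.sum_le_sum fun k _ => ?_
          have hk : j ≤ j + k := Nat.le_add_right j k
          have h1 := hstep (j + k) hk
          have heq : f (j + (k + 1)) - f (j + k) = f ((j + k) + 1) - f (j + k) := by
            rw [← Nat.add_assoc]
          rw [heq]
          refine le_trans h1 (le_of_eq ?_)
          have hjk : (0:ℝ) < ((j + k : ℕ) : ℝ) := by positivity
          push_cast
          push_cast at hjk
          field_simp
          ring
      _ = (fun k : ℕ => B / ((j + k : ℕ) : ℝ)) 0 - (fun k : ℕ => B / ((j + k : ℕ) : ℝ)) M :=
          Finset.sum_range_sub' _ M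
      _ ≤ B / (j : ℝ) := by
          show B / ((j + 0 : ℕ) : ℝ) - B / ((j + M : ℕ) : ℝ) ≤ B / (j : ℝ)
          simp only [Nat.add_zero]
          push_cast
          push_cast at hgM
          linarith
  have h4 : Filter.Tendsto (fun M => |f (j + M) - f j|) Filter.atTop (nhds |0 - f j|) := by
    have h1 : Filter.Tendsto (fun M : ℕ => j + M) Filter.atTop Filter.atTop := by
      have := Filter.tendsto_add_atTop_nat j
      simpa [Nat.add_comm] using this
    exact ((hlim.comp h1).sub_const (f j)).abs
  have h5 := le_of_tendsto h4 (Filter.Eventually.of_forall htel)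
  simpa using h5
theorem stmt0 (ξ : ℝ) (hξ : ∀ n : ℕ, ξ ≠ n) :
    ∃ C : ℝ, 0 < C ∧ ∀ j : ℕ, 1 ≤ j →
      |Real.Gamma ((j : ℝ) - ξ) / (Real.Gamma (-ξ) * Real.Gamma ((j : ℝ) + 1))
          - (j : ℝ) ^ (-ξ - 1) / Real.Gamma (-ξ)|
        ≤ C * (j : ℝ) ^ (-ξ - 2) := by
  have hΓ := aux_Gamma_ne ξ hξ
  have hΓabs : 0 < |Real.Gamma (-ξ)| := abs_pos.mpr hΓ
  set B : ℝ := 2 * (ξ + 1) ^ 2 + 2 * |ξ + 1| + 1 with hB_def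
  have hBpos : 0 < B := by positivity
  set K : ℕ := ⌈2 * |ξ + 1| + |ξ| + 2 + B⌉₊ + 1 with hK_def
  have hKcond : 2 * |ξ + 1| + |ξ| + 2 + B ≤ (K : ℝ) := by
    refine le_trans (Nat.le_ceil _) ?_
    rw [hK_def]
    push_cast
    linarith
  have hK1 : 1 ≤ K := Nat.le_add_left 1 _
  -- tail bound on |log (ff ξ j)|
  have hlogbound : ∀ j : ℕ, K ≤ j → |Real.log (ff ξ j)| ≤ B / (j : ℝ) := by
    intro j hj
    have hjK : (K : ℝ) ≤ (j : ℝ) := by exact_mod_cast hj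
    have habs := abs_nonneg (ξ + 1)
    have habs2 := abs_nonneg ξ
    have hjpos : 0 < j := by omega
    refine aux_telescope B (fun n => Real.log (ff ξ n)) j hjpos ?_ ?_
    · intro k hk
      have hcond : 2 * |ξ + 1| + |ξ| + 2 ≤ (k : ℝ) := by
        have hk' : (j : ℝ) ≤ (k : ℝ) := by exact_mod_cast hk
        linarith
      exact aux_increment ξ hξ k hcond
    · have h3 := (Real.continuousAt_log one_ne_zero).tendsto.comp (aux_tendsto ξ hξ)
      simpa [Function.comp_def] using h3
  -- from log bound to |ff - 1| bound
  have hffbound : ∀ j : ℕ, K ≤ j → |ff ξ j - 1| ≤ 2 * B / (j : ℝ) := by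
    intro j hj
    have hjK : (K : ℝ) ≤ (j : ℝ) := by exact_mod_cast hj
    have habs := abs_nonneg (ξ + 1)
    have habs2 := abs_nonneg ξ
    have hj0 : (0:ℝ) < (j : ℝ) := by linarith
    have hξj : ξ < (j : ℝ) := by
      have := le_abs_self ξ
      linarith
    have hpos : 0 < ff ξ j := aux_pos ξ j hξj hj0
    have hlb := hlogbound j hj
    have hle1 : |Real.log (ff ξ j)| ≤ 1 := by
      refine le_trans hlb ?_
      rw [div_le_one hj0]
      linarith
    have := Real.abs_exp_sub_one_le hle1
    rw [Real.exp_log hpos] at this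
    calc |ff ξ j - 1| ≤ 2 * |Real.log (ff ξ j)| := this
      _ ≤ 2 * (B / (j : ℝ)) := by linarith
      _ = 2 * B / (j : ℝ) := by ring
  -- the error expression
  set E : ℕ → ℝ := fun j =>
    Real.Gamma ((j : ℝ) - ξ) / (Real.Gamma (-ξ) * Real.Gamma ((j : ℝ) + 1))
      - (j : ℝ) ^ (-ξ - 1) / Real.Gamma (-ξ) with hE_def
  have hEeq : ∀ j : ℕ, 1 ≤ j →
      E j = ((j : ℝ) ^ (-ξ - 1) / Real.Gamma (-ξ)) * (ff ξ j - 1) := by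
    intro j hj
    have hj0 : (0:ℝ) < (j : ℝ) := by exact_mod_cast hj
    have hr : (j : ℝ) ^ (-ξ - 1) * (j : ℝ) ^ (ξ + 1) = 1 := by
      rw [← Real.rpow_add hj0]
      norm_num
    have hGj : Real.Gamma ((j : ℝ) + 1) ≠ 0 :=
      (Real.Gamma_pos_of_pos (by linarith)).ne'
    rw [hE_def, ff]
    field_simp
    linear_combination (-Real.Gamma ((j : ℝ) - ξ)) * hr
  -- tail estimate for E
  have hEtail : ∀ j : ℕ, K ≤ j → |E j| ≤ (2 * B / |Real.Gamma (-ξ)|) * (j : ℝ) ^ (-ξ - 2) := by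
    intro j hj
    have hj1 : 1 ≤ j := le_trans hK1 hj
    have hj0 : (0:ℝ) < (j : ℝ) := by exact_mod_cast hj1
    have hp : (0:ℝ) < (j : ℝ) ^ (-ξ - 1) := Real.rpow_pos_of_pos hj0 _
    have hsplit : (j : ℝ) ^ (-ξ - 2) = (j : ℝ) ^ (-ξ - 1) / (j : ℝ) := by
      rw [eq_div_iff hj0.ne']
      nth_rewrite 2 [← Real.rpow_one (j : ℝ)]
      rw [← Real.rpow_add hj0]
      ring_nf
    rw [hEeq j hj1, abs_mul, abs_div, abs_of_pos hp]
    calc (j : ℝ) ^ (-ξ - 1) / |Real.Gamma (-ξ)| * |ff ξ j - 1|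
        ≤ (j : ℝ) ^ (-ξ - 1) / |Real.Gamma (-ξ)| * (2 * B / (j : ℝ)) := by
          refine mul_le_mul_of_nonneg_left (hffbound j hj) (by positivity)
      _ = (2 * B / |Real.Gamma (-ξ)|) * ((j : ℝ) ^ (-ξ - 1) / (j : ℝ)) := by ring
      _ = (2 * B / |Real.Gamma (-ξ)|) * (j : ℝ) ^ (-ξ - 2) := by rw [hsplit]
  -- final constant
  refine ⟨2 * B / |Real.Gamma (-ξ)| + 1 + ∑ i ∈ Finset.range K, |E i| * (i : ℝ) ^ (ξ + 2),
    ?_, ?_⟩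
  · have hsum : 0 ≤ ∑ i ∈ Finset.range K, |E i| * (i : ℝ) ^ (ξ + 2) :=
      Finset.sum_nonneg fun i _ => mul_nonneg (abs_nonneg _) (Real.rpow_nonneg (Nat.cast_nonneg i) _)
    have : 0 < 2 * B / |Real.Gamma (-ξ)| := by positivity
    linarith
  · intro j hj
    have hj0 : (0:ℝ) < (j : ℝ) := by exact_mod_cast hj
    have hrpos : (0:ℝ) < (j : ℝ) ^ (-ξ - 2) := Real.rpow_pos_of_pos hj0 _
    have hsum : 0 ≤ ∑ i ∈ Finset.range K, |E i| * (i : ℝ) ^ (ξ + 2) :=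
      Finset.sum_nonneg fun i _ => mul_nonneg (abs_nonneg _) (Real.rpow_nonneg (Nat.cast_nonneg i) _)
    have hBG : 0 < 2 * B / |Real.Gamma (-ξ)| := by positivity
    rcases le_or_gt K j with hKj | hjK
    · refine le_trans (hEtail j hKj) ?_
      refine mul_le_mul_of_nonneg_right ?_ hrpos.le
      linarith
    · -- small j : use the finite sum
      have hmem : j ∈ Finset.range K := Finset.mem_range.mpr hjK
      have hone : (j : ℝ) ^ (ξ + 2) * (j : ℝ) ^ (-ξ - 2) = 1 := by
        rw [← Real.rpow_add hj0]
        norm_num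
      have hsingle : |E j| * (j : ℝ) ^ (ξ + 2)
          ≤ ∑ i ∈ Finset.range K, |E i| * (i : ℝ) ^ (ξ + 2) :=
        Finset.single_le_sum (f := fun i => |E i| * (i : ℝ) ^ (ξ + 2))
          (fun i _ => mul_nonneg (abs_nonneg _) (Real.rpow_nonneg (Nat.cast_nonneg i) _)) hmem
      calc |E j| = (|E j| * (j : ℝ) ^ (ξ + 2)) * (j : ℝ) ^ (-ξ - 2) := by
            rw [mul_assoc, hone, mul_one]
        _ ≤ (2 * B / |Real.Gamma (-ξ)| + 1 + ∑ i ∈ Finset.range K, |E i| * (i : ℝ) ^ (ξ + 2))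
              * (j : ℝ) ^ (-ξ - 2) := by
            refine mul_le_mul_of_nonneg_right ?_ hrpos.le
            linarith
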